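/- Let f: A → A' be a morphism in mon in a twisted homotopical category. If the Borel quotient A'⫽A admits a monoid structure such that π_f: A' → A'⫽A is a monoid morphism, and there is a weak equivalence of left B̄A'-comodules π̃: (A'⫽A)⫽A' → B̄A making the square with horizontal maps (π_{π_f}, δ_{π_f}) and (δ_f, B̄f) commute (i.e. π̃ ∘ π_{π_f} = δ_f and B̄f ∘ π̃ = δ_{π_f} composed appropriately), then f is h-normal with normality structure B̄π_f: B̄A' → B̄(A'⫽A). -/

import Mathlib

/-!
Statement 0 (Lemma 1.10(1) of Farjoun–Hess, "Normal and conormal maps in homotopy theory").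

In a twisted homotopical category, for every morphism `f : A ⟶ A'` of monoids there is a
weak equivalence of biprincipal bundles from
`(Ω B̄A' → B̄A' ∖̃ B̄A → B̄A)` to `(A' → A' ⫽ A → B̄A)`:
the left vertical map is the counit `v_{A'} : Ω B̄ A' → A'` (a weak equivalence), the middle
vertical map `B̄A' ∖̃ B̄A → A' ⫽ A` is a weak equivalence, and the right vertical map is the
identity of `B̄A`.

We model a twisted homotopical category as a homotopical category `(M, w)` (weak equivalences
contain identities and satisfy two-out-of-six) together with full subcategories `Mon` of
augmented monoids and `Comon` of coaugmented comonoids (given abstractly, with underlying-object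
functors into `M`), a cobar/bar adjunction `Ω ⊣ B̄`, and, for every classifying (comonoid) map
`g : C ⟶ B̄ A`, the total object `Tot g` of the corresponding classifiable biprincipal bundle
`A ⟶ Tot g ⟶ C`, with pushforwards along monoid maps and pullbacks along comonoid maps.
The classifying bundle of `A` is `ζ(A) = Tot (𝟙 (B̄ A))`, the classifying bundle of `C` is
`ξ(C) = Tot (u_C)` where `u` is the unit of the adjunction.  The Borel quotient of
`f : A ⟶ A'` is the total object of the bundle classified by `B̄ f`, and the Borel kernel
of `g : C' ⟶ C` is the total object of the bundle classified by `g ≫ u_C`.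
-/

open CategoryTheory

universe v v₁ v₂ u u₁ u₂

/-- A twisted homotopical category (interface form). -/
structure TwistedHomotopicalCategory (M : Type u) [Category.{v} M]
    (Mon : Type u₁) [Category.{v₁} Mon] (Comon : Type u₂) [Category.{v₂} Comon] where
  /-- the weak equivalences of `M` -/
  w : MorphismProperty M
  /-- weak equivalences contain all identities -/
  w_id : ∀ X : M, w (𝟙 X)
  /-- the two-out-of-six property -/
  w_two_out_of_six : ∀ {X Y Z T : M} (r : X ⟶ Y) (s : Y ⟶ Z) (t : Z ⟶ T),
    w (r ≫ s) → w (s ≫ t) → w r ∧ w s ∧ w t ∧ w (r ≫ s ≫ t)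
  /-- underlying object in `M` of a monoid -/
  monU : Mon ⥤ M
  /-- underlying object in `M` of a comonoid -/
  comonU : Comon ⥤ M
  /-- the cobar construction -/
  Om : Comon ⥤ Mon
  /-- the bar construction -/
  Bar : Mon ⥤ Comon
  /-- the cobar/bar adjunction -/
  adj : Om ⊣ Bar
  /-- the monoidal unit -/
  unit : M
  /-- the unit of an (augmented) monoid -/
  monUnit : ∀ A : Mon, unit ⟶ monU.obj A
  /-- the augmentation of an (augmented) monoid -/
  monAug : ∀ A : Mon, monU.obj A ⟶ unit
  /-- the counit of a (coaugmented) comonoid -/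
  comonCounit : ∀ C : Comon, comonU.obj C ⟶ unit
  /-- the coaugmentation of a (coaugmented) comonoid -/
  comonCoaug : ∀ C : Comon, unit ⟶ comonU.obj C
  /-- total object of the classifiable biprincipal bundle with fibre monoid `A`, base
  comonoid `C`, classified by `g : C ⟶ B̄ A`. -/
  Tot : ∀ {C : Comon} {A : Mon}, (C ⟶ Bar.obj A) → M
  /-- inclusion of the fibre monoid into the total object (a map of right `A`-modules) -/
  totI : ∀ {C : Comon} {A : Mon} (g : C ⟶ Bar.obj A), monU.obj A ⟶ Tot g
  /-- projection of the total object onto the base (a map of left `C`-comodules) -/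
  totP : ∀ {C : Comon} {A : Mon} (g : C ⟶ Bar.obj A), Tot g ⟶ comonU.obj C
  /-- pushforward of a classifiable biprincipal bundle along a monoid map:
  `f_* (Tot g) = Tot (g ≫ B̄ f)`, with its canonical comparison map. -/
  push : ∀ {C : Comon} {A A' : Mon} (g : C ⟶ Bar.obj A) (f : A ⟶ A'),
    Tot g ⟶ Tot (g ≫ Bar.map f)
  push_i : ∀ {C : Comon} {A A' : Mon} (g : C ⟶ Bar.obj A) (f : A ⟶ A'),
    totI g ≫ push g f = monU.map f ≫ totI (g ≫ Bar.map f)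
  push_p : ∀ {C : Comon} {A A' : Mon} (g : C ⟶ Bar.obj A) (f : A ⟶ A'),
    push g f ≫ totP (g ≫ Bar.map f) = totP g
  /-- pullback of a classifiable biprincipal bundle along a comonoid map:
  `h^* (Tot g) = Tot (h ≫ g)`, with its canonical comparison map. -/
  pull : ∀ {C' C : Comon} {A : Mon} (h : C' ⟶ C) (g : C ⟶ Bar.obj A),
    Tot (h ≫ g) ⟶ Tot g
  pull_i : ∀ {C' C : Comon} {A : Mon} (h : C' ⟶ C) (g : C ⟶ Bar.obj A),
    totI (h ≫ g) ≫ pull h g = totI g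
  pull_p : ∀ {C' C : Comon} {A : Mon} (h : C' ⟶ C) (g : C ⟶ Bar.obj A),
    pull h g ≫ totP g = totP (h ≫ g) ≫ comonU.map h
  /-- axiom (1): the unit of the cobar/bar adjunction is a weak equivalence -/
  unit_w : ∀ C : Comon, w (comonU.map (adj.unit.app C))
  /-- axiom (1): the counit of the cobar/bar adjunction is a weak equivalence -/
  counit_w : ∀ A : Mon, w (monU.map (adj.counit.app A))
  /-- axiom (2): `Ω` is homotopical -/
  Om_w : ∀ {C C' : Comon} (g : C ⟶ C'), w (comonU.map g) → w (monU.map (Om.map g))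
  /-- axiom (2): `B̄` is homotopical -/
  Bar_w : ∀ {A A' : Mon} (f : A ⟶ A'), w (monU.map f) → w (comonU.map (Bar.map f))
  /-- axiom (3): `𝓔 A ⟶ B̄ A ⟶ I` is a weak equivalence, where `𝓔 A = Tot (𝟙 (B̄ A))` -/
  E_acyclic : ∀ A : Mon, w (totP (𝟙 (Bar.obj A)) ≫ comonCounit (Bar.obj A))
  /-- axiom (4): `I ⟶ Ω C ⟶ 𝓟 C` is a weak equivalence, where `𝓟 C = Tot (u_C)` -/
  P_acyclic : ∀ C : Comon, w (monUnit (Om.obj C) ≫ totI (adj.unit.app C))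
  /-- axiom (5): pushforward of a classifiable biprincipal bundle along a weak
  equivalence of monoids is a weak equivalence of bundles -/
  push_w : ∀ {C : Comon} {A A' : Mon} (g : C ⟶ Bar.obj A) (f : A ⟶ A'),
    w (monU.map f) → w (push g f)
  /-- axiom (6): pullback of a classifiable biprincipal bundle along a weak
  equivalence of comonoids is a weak equivalence of bundles -/
  pull_w : ∀ {C' C : Comon} {A : Mon} (h : C' ⟶ C) (g : C ⟶ Bar.obj A),
    w (comonU.map h) → w (pull h g)

namespace TwistedHomotopicalCategory

variable {M : Type u} [Category.{v} M] {Mon : Type u₁} [Category.{v₁} Mon]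
  {Comon : Type u₂} [Category.{v₂} Comon]
  (T : TwistedHomotopicalCategory M Mon Comon)

/-- The Borel (homotopy) quotient `A' ⫽ A` of a monoid map `f : A ⟶ A'`: the total object of
the biprincipal bundle classified by `B̄ f`. -/
def borelQuot {A A' : Mon} (f : A ⟶ A') : M := T.Tot (T.Bar.map f)

/-- `π_f : A' ⟶ A' ⫽ A` -/
def πmap {A A' : Mon} (f : A ⟶ A') : T.monU.obj A' ⟶ T.borelQuot f := T.totI (T.Bar.map f)

/-- `δ_f : A' ⫽ A ⟶ B̄ A` -/
def δmap {A A' : Mon} (f : A ⟶ A') : T.borelQuot f ⟶ T.comonU.obj (T.Bar.obj A) :=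
  T.totP (T.Bar.map f)

/-- The Borel (homotopy) kernel `C ∖̃ C'` of a comonoid map `g : C' ⟶ C`: the total object of
the biprincipal bundle classified by `g ≫ u_C`. -/
def borelKer {C' C : Comon} (g : C' ⟶ C) : M := T.Tot (g ≫ T.adj.unit.app C)

/-- `∂_g : Ω C ⟶ C ∖̃ C'` -/
def delMap {C' C : Comon} (g : C' ⟶ C) : T.monU.obj (T.Om.obj C) ⟶ T.borelKer g :=
  T.totI (g ≫ T.adj.unit.app C)

/-- `ι_g : C ∖̃ C' ⟶ C'` -/
def ιmap {C' C : Comon} (g : C' ⟶ C) : T.borelKer g ⟶ T.comonU.obj C' :=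
  T.totP (g ≫ T.adj.unit.app C)

end TwistedHomotopicalCategory

open TwistedHomotopicalCategory

/-! ### Extended bundles and h-normality -/

namespace TwistedHomotopicalCategory

variable {M : Type u} [Category.{v} M] {Mon : Type u₁} [Category.{v₁} Mon]
  {Comon : Type u₂} [Category.{v₂} Comon]
  (T : TwistedHomotopicalCategory M Mon Comon)

/-- An extended bundle `A → Mo → N → C`: `A` is a monoid, `Mo` a right `A`-module with the
first map `A`-linear, `C` a comonoid, `N` a left `C`-comodule with the last map a comodule
map.  (The module and comodule structures are implicit in this interface.) -/
structure ExtBundle where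
  A : Mon
  Mo : M
  N : M
  C : Comon
  j : T.monU.obj A ⟶ Mo
  d : Mo ⟶ N
  p : N ⟶ T.comonU.obj C

/-- An elementary equivalence of extended bundles: a morphism of extended bundles all of whose
components are weak equivalences. -/
def ElemEquiv (E F : T.ExtBundle) : Prop :=
  ∃ (α : E.A ⟶ F.A) (μ : E.Mo ⟶ F.Mo) (ν : E.N ⟶ F.N) (β : E.C ⟶ F.C),
    T.w (T.monU.map α) ∧ T.w μ ∧ T.w ν ∧ T.w (T.comonU.map β) ∧
    E.j ≫ μ = T.monU.map α ≫ F.j ∧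
    E.d ≫ ν = μ ≫ F.d ∧
    E.p ≫ T.comonU.map β = ν ≫ F.p

/-- Equivalence of extended bundles: a zigzag of elementary equivalences. -/
def BundleEquiv : T.ExtBundle → T.ExtBundle → Prop :=
  Relation.EqvGen T.ElemEquiv

/-- The truncated Nomura–Puppe sequence `τ(f) = (A' → A'⫽A → B̄A → B̄A')` of a monoid
morphism `f : A ⟶ A'`. -/
def tau {A A' : Mon} (f : A ⟶ A') : T.ExtBundle where
  A := A'
  Mo := T.borelQuot f
  N := T.comonU.obj (T.Bar.obj A)
  C := T.Bar.obj A'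
  j := T.πmap f
  d := T.δmap f
  p := T.comonU.map (T.Bar.map f)

/-- The truncated dual Nomura–Puppe sequence `θ(g) = (ΩC' → ΩC → C ∖̃ C' → C')` of a comonoid
morphism `g : C' ⟶ C`. -/
def theta {C' C : Comon} (g : C' ⟶ C) : T.ExtBundle where
  A := T.Om.obj C'
  Mo := T.monU.obj (T.Om.obj C)
  N := T.borelKer g
  C := C'
  j := T.monU.map (T.Om.map g)
  d := T.delMap g
  p := T.ιmap g

/-- The pair `(f, g)` is normal if `τ(f)` and `θ(g)` are equivalent extended bundles;
then `f` is h-normal with normality structure `g`, and `g` is h-conormal with conormality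
structure `f`. -/
def IsNormalPair {A A' : Mon} (f : A ⟶ A') {C' C : Comon} (g : C' ⟶ C) : Prop :=
  T.BundleEquiv (T.tau f) (T.theta g)

/-- `f` is h-normal if there is a comonoid map `g` such that `(f, g)` is a normal pair. -/
def IsHNormal {A A' : Mon} (f : A ⟶ A') : Prop :=
  ∃ (C' C : Comon) (g : C' ⟶ C), T.IsNormalPair f g

/-- `g` is h-conormal if there is a monoid map `f` such that `(f, g)` is a normal pair. -/
def IsHConormal {C' C : Comon} (g : C' ⟶ C) : Prop :=
  ∃ (A A' : Mon) (f : A ⟶ A'), T.IsNormalPair f g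

end TwistedHomotopicalCategory

namespace TwistedHomotopicalCategory

variable {M : Type u} [Category.{v} M] {Mon : Type u₁} [Category.{v₁} Mon]
  {Comon : Type u₂} [Category.{v₂} Comon]
  (T : TwistedHomotopicalCategory M Mon Comon)

/-- Isomorphisms are weak equivalences (from two-out-of-six and identities). -/
lemma w_of_iso {X Y : M} (e : X ≅ Y) : T.w e.hom := by
  have h1 : T.w (e.hom ≫ e.inv) := by rw [e.hom_inv_id]; exact T.w_id X
  have h2 : T.w (e.inv ≫ e.hom) := by rw [e.inv_hom_id]; exact T.w_id Y
  exact (T.w_two_out_of_six e.hom e.inv e.hom h1 h2).1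

lemma totI_eqToHom {C : Comon} {A : Mon} {g₁ g₂ : C ⟶ T.Bar.obj A} (e : g₁ = g₂) :
    T.totI g₁ ≫ eqToHom (congrArg T.Tot e) = T.totI g₂ := by
  subst e; simp

lemma eqToHom_totP {C : Comon} {A : Mon} {g₁ g₂ : C ⟶ T.Bar.obj A} (e : g₁ = g₂) :
    eqToHom (congrArg T.Tot e) ≫ T.totP g₂ = T.totP g₁ := by
  subst e; simp

lemma w_comp_eqToHom {C : Comon} {A : Mon} {g₁ g₂ : C ⟶ T.Bar.obj A} (e : g₁ = g₂)
    {X : M} {x : X ⟶ T.Tot g₁} (hx : T.w x) :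
    T.w (x ≫ eqToHom (congrArg T.Tot e)) := by
  subst e; simpa using hx

end TwistedHomotopicalCategory

/-- (Lemma 2.7 of the paper.)  Let `f : A ⟶ A'` be a morphism in `mon`.
Suppose the Borel quotient `A' ⫽ A` admits a monoid structure (a monoid `Q` whose underlying
object is isomorphic to `A' ⫽ A`) with respect to which `π_f : A' ⟶ A' ⫽ A` is a monoid
morphism `p : A' ⟶ Q`, and suppose there is a weak equivalence (of left `B̄A'`-comodules)
`π̃ : (A' ⫽ A) ⫽ A' ⟶ B̄ A` such that the square with horizontal maps
`(π_{π_f}, δ_{π_f})` and `(δ_f, B̄ f)` commutes, i.e. `π̃ ∘ π_{π_f} = δ_f` and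
`B̄f ∘ π̃ = δ_{π_f}`.  Then `f` is h-normal with normality structure
`B̄ π_f : B̄ A' ⟶ B̄ (A' ⫽ A)`. -/
theorem normal_conormal_stmt6
    {M : Type u} [Category.{v} M] {Mon : Type u₁} [Category.{v₁} Mon]
    {Comon : Type u₂} [Category.{v₂} Comon]
    (T : TwistedHomotopicalCategory M Mon Comon)
    {A A' : Mon} (f : A ⟶ A')
    -- a monoid structure on `A' ⫽ A` …
    (Q : Mon) (φ : T.monU.obj Q ≅ T.borelQuot f)
    -- … with respect to which `π_f` is a monoid morphism
    (p : A' ⟶ Q) (hp : T.monU.map p = T.πmap f ≫ φ.inv)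
    -- a weak equivalence `π̃ : (A' ⫽ A) ⫽ A' ⟶ B̄ A` …
    (πt : T.borelQuot p ⟶ T.comonU.obj (T.Bar.obj A)) (hπt : T.w πt)
    -- … such that `π̃ ∘ π_{π_f} = δ_f` and `B̄f ∘ π̃ = δ_{π_f}`
    (sq₁ : φ.inv ≫ T.πmap p ≫ πt = T.δmap f)
    (sq₂ : πt ≫ T.comonU.map (T.Bar.map f) = T.δmap p) :
    T.IsNormalPair f (T.Bar.map p) := by
  have hg : (T.Bar.map p ≫ T.adj.unit.app (T.Bar.obj Q)) ≫ T.Bar.map (T.adj.counit.app Q)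
      = T.Bar.map p := by
    rw [Category.assoc, T.adj.right_triangle_components, Category.comp_id]
  -- the intermediate extended bundle `A' → Q → Q ⫽ A' → B̄ A'`
  let E₁ : T.ExtBundle :=
    ⟨A', T.monU.obj Q, T.borelQuot p, T.Bar.obj A', T.monU.map p, T.πmap p, T.δmap p⟩
  have h1 : T.ElemEquiv E₁ (T.tau f) := by
    refine ⟨𝟙 A', φ.hom, πt, 𝟙 (T.Bar.obj A'), ?_, T.w_of_iso φ, hπt, ?_, ?_, ?_, ?_⟩
    · exact (congrArg (fun x : T.monU.obj A' ⟶ T.monU.obj A' => T.w x) (T.monU.map_id A')).mpr (T.w_id _)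
    · exact (congrArg (fun x : T.comonU.obj (T.Bar.obj A') ⟶ T.comonU.obj (T.Bar.obj A') => T.w x) (T.comonU.map_id _)).mpr (T.w_id _)
    · show T.monU.map p ≫ φ.hom = T.monU.map (𝟙 A') ≫ T.πmap f
      rw [hp, T.monU.map_id, Category.id_comp, Category.assoc, φ.inv_hom_id, Category.comp_id]
    · show T.πmap p ≫ πt = φ.hom ≫ T.δmap f
      rw [← sq₁, ← Category.assoc, φ.hom_inv_id, Category.id_comp]
    · show T.δmap p ≫ T.comonU.map (𝟙 (T.Bar.obj A')) = πt ≫ T.comonU.map (T.Bar.map f)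
      rw [T.comonU.map_id, Category.comp_id, ← sq₂]
  have h2 : T.ElemEquiv (T.theta (T.Bar.map p)) E₁ := by
    refine ⟨T.adj.counit.app A', T.monU.map (T.adj.counit.app Q),
      T.push (T.Bar.map p ≫ T.adj.unit.app (T.Bar.obj Q)) (T.adj.counit.app Q) ≫
        eqToHom (congrArg T.Tot hg),
      𝟙 (T.Bar.obj A'), T.counit_w A', T.counit_w Q,
      T.w_comp_eqToHom hg (T.push_w _ _ (T.counit_w Q)), ?_, ?_, ?_, ?_⟩
    · exact (congrArg (fun x : T.comonU.obj (T.Bar.obj A') ⟶ T.comonU.obj (T.Bar.obj A') => T.w x) (T.comonU.map_id _)).mpr (T.w_id _)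
    · show T.monU.map (T.Om.map (T.Bar.map p)) ≫ T.monU.map (T.adj.counit.app Q)
        = T.monU.map (T.adj.counit.app A') ≫ T.monU.map p
      rw [← T.monU.map_comp, ← T.monU.map_comp]
      congr 1
      exact T.adj.counit.naturality p
    · show T.delMap (T.Bar.map p) ≫ _ = T.monU.map (T.adj.counit.app Q) ≫ T.πmap p
      change T.totI (T.Bar.map p ≫ T.adj.unit.app (T.Bar.obj Q)) ≫ (T.push (T.Bar.map p ≫ T.adj.unit.app (T.Bar.obj Q)) (T.adj.counit.app Q) ≫ eqToHom (congrArg T.Tot hg)) = T.monU.map (T.adj.counit.app Q) ≫ T.πmap p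
      rw [← Category.assoc, T.push_i, Category.assoc,
        T.totI_eqToHom hg]
      rfl
    · show T.ιmap (T.Bar.map p) ≫ T.comonU.map (𝟙 (T.Bar.obj A')) = _ ≫ T.δmap p
      change T.ιmap (T.Bar.map p) ≫ T.comonU.map (𝟙 (T.Bar.obj A')) = (T.push (T.Bar.map p ≫ T.adj.unit.app (T.Bar.obj Q)) (T.adj.counit.app Q) ≫ eqToHom (congrArg T.Tot hg)) ≫ T.δmap p
      rw [T.comonU.map_id, Category.comp_id, TwistedHomotopicalCategory.δmap,
        Category.assoc, T.eqToHom_totP hg, T.push_p]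
      rfl
  exact Relation.EqvGen.trans _ _ _
    (Relation.EqvGen.symm _ _ (Relation.EqvGen.rel _ _ h1))
    (Relation.EqvGen.symm _ _ (Relation.EqvGen.rel _ _ h2))
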